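/- Let a₁ ≥ ··· ≥ a_r ≥ 1 be integers with C(aᵢ − aⱼ, 2) ≤ aⱼ − 1 for all i < j (equivalently (aᵢ−aⱼ)² ≤ aᵢ + aⱼ − 2). Then Σ_{1≤i<j≤r} (aᵢ − aⱼ)² ≤ (r−1)ℓ − r², where ℓ = a₁ + ··· + a_r, provided r ≥ 4 and a_r ≥ 2. -/

import Mathlib

open Finset

lemma double_count_aux (r : ℕ) (F : ℕ → ℕ → ℤ)
    (hsymm : ∀ i j, F i j = F j i)
    (hdiag : ∀ i, i ∈ Finset.Icc 1 r → 0 ≤ F i i) :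
    2 * ∑ i ∈ Finset.Icc 1 r, ∑ j ∈ Finset.Icc (i+1) r, F i j ≤
      ∑ i ∈ Finset.Icc 1 r, ∑ j ∈ Finset.Icc 1 r, F i j := by
  have hIcc : ∀ k : ℕ, Finset.Icc 1 k = Finset.Ioc 0 k := by
    intro k; rw [← Finset.Icc_add_one_left_eq_Ioc]; rfl
  have hsplit : ∑ i ∈ Finset.Icc 1 r, ∑ j ∈ Finset.Icc 1 r, F i j
      = (∑ i ∈ Finset.Icc 1 r, ∑ j ∈ Finset.Ioc 0 i, F i j)
        + ∑ i ∈ Finset.Icc 1 r, ∑ j ∈ Finset.Icc (i+1) r, F i j := by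
    rw [← Finset.sum_add_distrib]
    refine Finset.sum_congr rfl ?_
    intro i hi
    simp only [Finset.mem_Icc] at hi
    rw [hIcc r, Finset.Icc_add_one_left_eq_Ioc,
      ← Finset.sum_Ioc_consecutive (fun j => F i j) (Nat.zero_le i) hi.2]
  have hlow : ∑ i ∈ Finset.Icc 1 r, ∑ j ∈ Finset.Ioc 0 i, F i j
      = (∑ i ∈ Finset.Icc 1 r, ∑ j ∈ Finset.Ioc 0 (i-1), F i j)
        + ∑ i ∈ Finset.Icc 1 r, F i i := by
    rw [← Finset.sum_add_distrib]
    refine Finset.sum_congr rfl ?_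
    intro i hi
    simp only [Finset.mem_Icc] at hi
    obtain ⟨k, rfl⟩ : ∃ k, i = k + 1 := ⟨i - 1, by omega⟩
    rw [Finset.sum_Ioc_succ_top (Nat.zero_le k)]
    simp
  have hswap : ∑ i ∈ Finset.Icc 1 r, ∑ j ∈ Finset.Ioc 0 (i-1), F i j
      = ∑ i ∈ Finset.Icc 1 r, ∑ j ∈ Finset.Icc (i+1) r, F i j := by
    rw [Finset.sum_sigma', Finset.sum_sigma']
    refine Finset.sum_nbij' (fun x => ⟨x.2, x.1⟩) (fun x => ⟨x.2, x.1⟩) ?_ ?_ ?_ ?_ ?_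
    · rintro ⟨i, j⟩ h
      simp only [Finset.mem_sigma, Finset.mem_Icc, Finset.mem_Ioc] at h ⊢
      omega
    · rintro ⟨i, j⟩ h
      simp only [Finset.mem_sigma, Finset.mem_Icc, Finset.mem_Ioc] at h ⊢
      omega
    · rintro ⟨i, j⟩ _; rfl
    · rintro ⟨i, j⟩ _; rfl
    · rintro ⟨i, j⟩ _; exact hsymm i j
  have hdiag' : 0 ≤ ∑ i ∈ Finset.Icc 1 r, F i i :=
    Finset.sum_nonneg hdiag
  omega

lemma sum_bound_aux (r : ℕ) (hr : 1 ≤ r) (b : ℕ → ℤ) (d S : ℤ)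
    (hb0 : ∀ i ∈ Finset.Icc 1 r, 0 ≤ b i)
    (hbd : ∀ i ∈ Finset.Icc 1 r, b i ≤ d)
    (hS : S = ∑ i ∈ Finset.Icc 1 r, b i) :
    ∑ i ∈ Finset.Icc 1 r, ∑ j ∈ Finset.Icc (i+1) r, (b i - b j) ^ 2
      ≤ (r : ℤ) * d * S - S ^ 2 := by
  have hcard : (Finset.Icc 1 r).card = r := by rw [Nat.card_Icc]; omega
  set F : ℕ → ℕ → ℤ := fun i j => b i * (d - b j) + b j * (d - b i) with hF
  have step1 : ∑ i ∈ Finset.Icc 1 r, ∑ j ∈ Finset.Icc (i + 1) r, (b i - b j) ^ 2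
      ≤ ∑ i ∈ Finset.Icc 1 r, ∑ j ∈ Finset.Icc (i + 1) r, F i j := by
    refine Finset.sum_le_sum ?_
    intro i hi
    refine Finset.sum_le_sum ?_
    intro j hj
    simp only [Finset.mem_Icc] at hi hj
    have hjm : j ∈ Finset.Icc 1 r := by simp only [Finset.mem_Icc]; omega
    have him : i ∈ Finset.Icc 1 r := by simp only [Finset.mem_Icc]; omega
    have h1 := hb0 i him; have h2 := hb0 j hjm
    have h3 := hbd i him; have h4 := hbd j hjm
    simp only [hF]
    nlinarith [mul_nonneg h1 (sub_nonneg.2 h3), mul_nonneg h2 (sub_nonneg.2 h4)]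
  have step2 : 2 * ∑ i ∈ Finset.Icc 1 r, ∑ j ∈ Finset.Icc (i + 1) r, F i j
      ≤ ∑ i ∈ Finset.Icc 1 r, ∑ j ∈ Finset.Icc 1 r, F i j := by
    refine double_count_aux r F (fun i j => by simp only [hF]; ring) ?_
    intro i hi
    have h1 := hb0 i hi; have h2 := hbd i hi
    simp only [hF]
    nlinarith [mul_nonneg h1 (sub_nonneg.2 h2)]
  have step3 : ∑ i ∈ Finset.Icc 1 r, ∑ j ∈ Finset.Icc 1 r, F i j
      = 2 * ((r : ℤ) * d * S - S ^ 2) := by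
    have hinner : ∀ i ∈ Finset.Icc 1 r, ∑ j ∈ Finset.Icc 1 r, F i j
        = b i * ((r : ℤ) * d - S) + S * (d - b i) := by
      intro i _
      simp only [hF]
      rw [Finset.sum_add_distrib, ← Finset.mul_sum, ← Finset.sum_mul,
        Finset.sum_sub_distrib, Finset.sum_const, hcard, nsmul_eq_mul, ← hS]
    rw [Finset.sum_congr rfl hinner, Finset.sum_add_distrib, ← Finset.sum_mul,
      ← Finset.mul_sum, Finset.sum_sub_distrib, Finset.sum_const, hcard,
      nsmul_eq_mul, ← hS]
    ring
  omega

lemma final_arith (R d S m : ℤ) (hR4 : 4 ≤ R) (hm2 : 2 ≤ m) (hd0 : 0 ≤ d)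
    (hSd : d ≤ S) (hkey : d ^ 2 ≤ d + 2 * m - 2) :
    R * d * S - S ^ 2 ≤ (R - 1) * (R * m + S) - R ^ 2 := by
  have hRpos : (0 : ℤ) ≤ R := by linarith
  have hRR1 : (0 : ℤ) ≤ R * (R - 1) := by nlinarith
  have h2m : 2 * (R * (R - 1)) ≤ R * (R - 1) * m := by
    nlinarith [mul_le_mul_of_nonneg_left hm2 hRR1]
  rcases le_or_gt d 1 with hd1 | hd2
  · have hS0 : (0 : ℤ) ≤ S := le_trans hd0 hSd
    nlinarith [h2m, mul_nonneg (mul_nonneg hRpos hS0) (by linarith : (0:ℤ) ≤ 1 - d),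
      sq_nonneg (2 * S - 1)]
  · have hd2' : (2 : ℤ) ≤ d := hd2
    have hd4 : (4 : ℤ) ≤ d ^ 2 := by nlinarith
    have hRR2 : (0 : ℤ) ≤ R * (R - 2) := by nlinarith
    have hpoly : (R + 1) ^ 2 ≤ R * (R - 2) * d ^ 2 := by
      have h1 : 4 * (R * (R - 2)) ≤ R * (R - 2) * d ^ 2 := by
        nlinarith [mul_le_mul_of_nonneg_left hd4 hRR2]
      nlinarith [sq_nonneg (R - 4)]
    have hmm : R * (R - 1) * (d ^ 2 - d + 2) ≤ 2 * (R * (R - 1)) * m := by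
      nlinarith [mul_le_mul_of_nonneg_left (show d ^ 2 - d + 2 ≤ 2 * m by linarith) hRR1]
    have key : (R * d - R + 1) ^ 2 + 4 * R ^ 2 ≤ 4 * (R * (R - 1)) * m := by
      nlinarith [hmm, hpoly]
    nlinarith [sq_nonneg (2 * S - (R * d - R + 1)), key]


theorem sum_sq_diff_bound (r : ℕ) (hr : 4 ≤ r)
    (a : ℕ → ℕ)
    (hge2 : ∀ i, 1 ≤ i → i ≤ r → 2 ≤ a i)
    (hanti : ∀ i j, 1 ≤ i → i ≤ j → j ≤ r → a j ≤ a i)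
    (hdiff : ∀ i j, 1 ≤ i → i < j → j ≤ r →
      ((a i : ℤ) - (a j : ℤ)) ^ 2 ≤ (a i : ℤ) + (a j : ℤ) - 2)
    (ℓ : ℕ) (hℓ : ℓ = ∑ i ∈ Finset.Icc 1 r, a i) :
    ∑ i ∈ Finset.Icc 1 r, ∑ j ∈ Finset.Icc (i + 1) r, ((a i : ℤ) - (a j : ℤ)) ^ 2 ≤
      ((r : ℤ) - 1) * (ℓ : ℤ) - (r : ℤ) ^ 2 := by
  obtain ⟨S, hS⟩ : ∃ S : ℤ, S = ∑ i ∈ Finset.Icc 1 r, ((a i : ℤ) - (a r : ℤ)) := ⟨_, rfl⟩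
  obtain ⟨d, hd⟩ : ∃ d : ℤ, d = (a 1 : ℤ) - (a r : ℤ) := ⟨_, rfl⟩
  obtain ⟨m, hm⟩ : ∃ m : ℤ, m = (a r : ℤ) := ⟨_, rfl⟩
  obtain ⟨R, hR⟩ : ∃ R : ℤ, R = (r : ℤ) := ⟨_, rfl⟩
  have hcard : (Finset.Icc 1 r).card = r := by rw [Nat.card_Icc]; omega
  have hR4 : (4 : ℤ) ≤ R := by rw [hR]; exact_mod_cast hr
  have hm2 : (2 : ℤ) ≤ m := by rw [hm]; exact_mod_cast hge2 r (by omega) le_rfl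
  have hb0 : ∀ i ∈ Finset.Icc 1 r, (0 : ℤ) ≤ (a i : ℤ) - (a r : ℤ) := by
    intro i hi; simp only [Finset.mem_Icc] at hi
    have := hanti i r hi.1 hi.2 le_rfl
    push_cast; omega
  have hbd : ∀ i ∈ Finset.Icc 1 r, (a i : ℤ) - (a r : ℤ) ≤ d := by
    intro i hi; simp only [Finset.mem_Icc] at hi
    have := hanti 1 i (le_refl 1) hi.1 hi.2
    rw [hd]; push_cast; omega
  have h1mem : (1 : ℕ) ∈ Finset.Icc 1 r := by simp; omega
  have hd0 : (0 : ℤ) ≤ d := by rw [hd]; exact hb0 1 h1mem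
  have hSd : d ≤ S := by
    rw [hS, hd]
    exact Finset.single_le_sum (f := fun i => (a i : ℤ) - (a r : ℤ)) hb0 h1mem
  have hSrd : S ≤ R * d := by
    rw [hS, hR]
    calc ∑ i ∈ Finset.Icc 1 r, ((a i : ℤ) - (a r : ℤ))
        ≤ ∑ _i ∈ Finset.Icc 1 r, d := Finset.sum_le_sum hbd
      _ = (r : ℤ) * d := by rw [Finset.sum_const, hcard, nsmul_eq_mul]
  have hkey : d ^ 2 ≤ d + 2 * m - 2 := by
    have := hdiff 1 r (le_refl 1) (by omega) le_rfl
    rw [hd, hm]; nlinarith [this]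
  have hl : (ℓ : ℤ) = R * m + S := by
    have h1 : (ℓ : ℤ) = ∑ i ∈ Finset.Icc 1 r, (a i : ℤ) := by
      rw [hℓ]; push_cast; rfl
    have h2 : ∀ i ∈ Finset.Icc 1 r, (a i : ℤ) = m + ((a i : ℤ) - (a r : ℤ)) := by
      intro i _; rw [hm]; ring
    rw [h1, Finset.sum_congr rfl h2, Finset.sum_add_distrib, Finset.sum_const,
      hcard, nsmul_eq_mul, ← hS, hm, hR]
  have hσ : ∑ i ∈ Finset.Icc 1 r, ∑ j ∈ Finset.Icc (i + 1) r, ((a i : ℤ) - (a j : ℤ)) ^ 2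
      ≤ R * d * S - S ^ 2 := by
    have haux := sum_bound_aux r (by omega) (fun i => (a i : ℤ) - (a r : ℤ)) d S hb0 hbd hS
    have hconv : ∑ i ∈ Finset.Icc 1 r, ∑ j ∈ Finset.Icc (i + 1) r, ((a i : ℤ) - (a j : ℤ)) ^ 2
        = ∑ i ∈ Finset.Icc 1 r, ∑ j ∈ Finset.Icc (i + 1) r,
            (((a i : ℤ) - (a r : ℤ)) - ((a j : ℤ) - (a r : ℤ))) ^ 2 :=
      Finset.sum_congr rfl fun i _ => Finset.sum_congr rfl fun j _ => by ring
    rw [hconv, hR]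
    exact haux
  refine le_trans hσ ?_
  rw [hl, ← hR]
  exact final_arith R d S m hR4 hm2 hd0 hSd hkey
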